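/- arXiv:1403.6484 — 2 statements merged into one kernel-verified Lean document; each statement's English description precedes it below -/
import Mathlib

section
/- Fix k ≥ 1 and α ∈ (-1/2, 0) ∪ (0, 1/2), and let h(x) = Σ_{j=0}^k (-1)^j C(k,j) (x-j)₊^α. Then h ∈ L²(ℝ), i.e. ∫_ℝ h(x)² dx < ∞. -/
open MeasureTheory

noncomputable def Sfd (k : ℕ) (β : ℝ) (x : ℝ) : ℝ :=
  ∑ j ∈ Finset.range (k+1), (-1:ℝ)^j * (Nat.choose k j : ℝ) * (x - (j:ℝ)) ^ β

lemma Sfd_succ (k : ℕ) (β : ℝ) (x : ℝ) :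
    Sfd (k+1) β x = Sfd k β x - Sfd k β (x - 1) := by
  have h1 : Sfd (k+1) β x
      = (∑ j ∈ Finset.range (k+1),
          (((-1:ℝ)^(j+1) * (Nat.choose k (j+1) : ℝ) * (x - ((j:ℝ)+1)) ^ β)
           + (-((-1:ℝ)^j * (Nat.choose k j : ℝ) * ((x-1) - (j:ℝ)) ^ β))))
        + (-1:ℝ)^0 * (Nat.choose (k+1) 0 : ℝ) * (x - ((0:ℕ):ℝ)) ^ β := by
    rw [Sfd, Finset.sum_range_succ']
    congr 1
    apply Finset.sum_congr rfl
    intro j _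
    have hc : ((k+1).choose (j+1) : ℝ) = (k.choose j : ℝ) + (k.choose (j+1) : ℝ) := by
      exact_mod_cast congrArg (Nat.cast (R := ℝ)) (Nat.choose_succ_succ k j)
    have hx : x - ((j+1:ℕ):ℝ) = (x - 1) - (j:ℝ) := by push_cast; ring
    have hx2 : x - ((j+1:ℕ):ℝ) = x - ((j:ℝ)+1) := by push_cast; ring
    have hb2 : x - ((j:ℝ)+1) = (x - 1) - (j:ℝ) := by ring
    rw [hx, hb2, hc, pow_succ]
    ring
  rw [h1, Finset.sum_add_distrib]
  have h2 : (∑ j ∈ Finset.range (k+1),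
        (-1:ℝ)^(j+1) * (Nat.choose k (j+1) : ℝ) * (x - ((j:ℝ)+1)) ^ β)
      + (-1:ℝ)^0 * (Nat.choose (k+1) 0 : ℝ) * (x - ((0:ℕ):ℝ)) ^ β = Sfd k β x := by
    rw [Finset.sum_range_succ]
    simp only [Nat.choose_succ_self, Nat.cast_zero, mul_zero, zero_mul, add_zero]
    rw [Sfd, Finset.sum_range_succ']
    congr 1
    · apply Finset.sum_congr rfl
      intro j _
      push_cast
      ring_nf
    · norm_num
  have h3 : (∑ j ∈ Finset.range (k+1),
        (-((-1:ℝ)^j * (Nat.choose k j : ℝ) * ((x-1) - (j:ℝ)) ^ β)))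
      = - Sfd k β (x-1) := by
    rw [Sfd, ← Finset.sum_neg_distrib]
  rw [add_right_comm, h2, h3]
  ring

lemma Sfd_hasDerivAt (k : ℕ) (β : ℝ) {x : ℝ} (hx : (k:ℝ) < x) :
    HasDerivAt (Sfd k β) (β * Sfd k (β-1) x) x := by
  have key : HasDerivAt (fun y : ℝ => ∑ j ∈ Finset.range (k+1),
        (-1:ℝ)^j * (Nat.choose k j : ℝ) * (y - (j:ℝ)) ^ β)
      (∑ j ∈ Finset.range (k+1),
        (-1:ℝ)^j * (Nat.choose k j : ℝ) * (β * (x - (j:ℝ)) ^ (β-1))) x := by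
    apply HasDerivAt.fun_sum
    intro j hj
    have hj' : (j:ℝ) ≤ (k:ℝ) := by
      exact_mod_cast Nat.le_of_lt_succ (Finset.mem_range.mp hj)
    have hxj : x - (j:ℝ) ≠ 0 := by
      have : (0:ℝ) < x - j := by linarith
      linarith [this]
    have h1 : HasDerivAt (fun t : ℝ => (t - (j:ℝ)) ^ β)
        (β * (x - (j:ℝ)) ^ (β - 1)) x := by
      have h0 := Real.hasDerivAt_rpow_const (x := x - (j:ℝ)) (p := β) (Or.inl hxj)
      have h2 := h0.comp x ((hasDerivAt_id x).sub_const (j:ℝ))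
      simpa [Function.comp_def] using h2
    exact h1.const_mul _
  have : HasDerivAt (Sfd k β)
      (∑ j ∈ Finset.range (k+1),
        (-1:ℝ)^j * (Nat.choose k j : ℝ) * (β * (x - (j:ℝ)) ^ (β-1))) x := key
  convert this using 1
  rw [Sfd, Finset.mul_sum]
  apply Finset.sum_congr rfl
  intro j _
  ring

lemma Sfd_decay (k : ℕ) (β : ℝ) (hβ : β < k) : ∃ C : ℝ, 0 ≤ C ∧
    ∀ x : ℝ, (k:ℝ) < x → |Sfd k β x| ≤ C * (x - (k:ℝ)) ^ (β - (k:ℝ)) := by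
  induction k generalizing β with
  | zero =>
    refine ⟨1, zero_le_one, fun x hx => ?_⟩
    have hx0 : (0:ℝ) < x := by exact_mod_cast hx
    have hS : Sfd 0 β x = x ^ β := by simp [Sfd]
    rw [hS, abs_of_nonneg (Real.rpow_nonneg hx0.le β)]
    simp
  | succ k ih =>
    have hβ' : β - 1 < (k:ℝ) := by push_cast at hβ ⊢; linarith
    obtain ⟨C, hC0, hC⟩ := ih (β-1) hβ'
    refine ⟨|β| * C, by positivity, fun x hx => ?_⟩
    have hx' : (k:ℝ) < x - 1 := by push_cast at hx; linarith
    have hmvt := exists_hasDerivAt_eq_slope (Sfd k β) (fun t => β * Sfd k (β-1) t)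
      (show x - 1 < x by linarith)
      (fun t ht => ((Sfd_hasDerivAt k β (lt_of_lt_of_le hx' ht.1)).continuousAt).continuousWithinAt)
      (fun t ht => Sfd_hasDerivAt k β (lt_trans hx' ht.1))
    obtain ⟨c, hc, hceq⟩ := hmvt
    have hden : x - (x - 1) = 1 := by ring
    rw [hden, div_one] at hceq
    rw [Sfd_succ, ← hceq]
    have hck : (k:ℝ) < c := lt_trans hx' hc.1
    have hbound := hC c hck
    have hpos : (0:ℝ) < x - ((k:ℕ)+1:ℝ) := by push_cast at hx; linarith
    have hmono : (c - (k:ℝ)) ^ ((β - 1) - (k:ℝ)) ≤ (x - ((k:ℝ)+1)) ^ ((β-1) - (k:ℝ)) := by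
      apply Real.rpow_le_rpow_of_nonpos hpos
      · linarith [hc.1]
      · push_cast at hβ; linarith
    have e1 : ((β:ℝ) - 1) - (k:ℝ) = β - ((k:ℕ)+1:ℝ) := by push_cast; ring
    calc |β * Sfd k (β-1) c| = |β| * |Sfd k (β-1) c| := abs_mul _ _
      _ ≤ |β| * (C * (c - (k:ℝ)) ^ ((β-1) - (k:ℝ))) := by
          apply mul_le_mul_of_nonneg_left hbound (abs_nonneg β)
      _ ≤ |β| * (C * (x - ((k:ℝ)+1)) ^ ((β-1) - (k:ℝ))) := by
          apply mul_le_mul_of_nonneg_left _ (abs_nonneg β)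
          exact mul_le_mul_of_nonneg_left hmono hC0
      _ = |β| * C * (x - (((k:ℕ):ℝ)+1)) ^ (β - (((k:ℕ):ℝ)+1)) := by
          rw [e1]; push_cast; ring
      _ = |β| * C * (x - ((k+1:ℕ):ℝ)) ^ (β - ((k+1:ℕ):ℝ)) := by push_cast; ring_nf

theorem stmt_4 (k : ℕ) (hk : 1 ≤ k) (α : ℝ)
    (hα : α ∈ Set.Ioo (-(1/2) : ℝ) 0 ∪ Set.Ioo (0:ℝ) (1/2)) :
    Integrable (fun x : ℝ =>
      (∑ j ∈ Finset.range (k+1), (-1:ℝ)^j * (Nat.choose k j : ℝ) *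
          (if x - (j:ℝ) ≤ 0 then 0 else (x - (j:ℝ)) ^ α)) ^ 2) volume := by
  have hα1 : -(1/2:ℝ) < α := by
    rcases hα with h|h
    · exact h.1
    · linarith [h.1]
  have hα2 : α < (1/2:ℝ) := by
    rcases hα with h|h
    · linarith [h.2]
    · exact h.2
  have hk1 : (1:ℝ) ≤ (k:ℝ) := by exact_mod_cast hk
  set g : ℝ → ℝ := fun x =>
    ∑ j ∈ Finset.range (k+1), (-1:ℝ)^j * (Nat.choose k j : ℝ) *
      (if x - (j:ℝ) ≤ 0 then 0 else (x - (j:ℝ)) ^ α) with hg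
  -- measurability
  have hmeasT : ∀ (c : ℝ) (j : ℕ),
      Measurable (fun x : ℝ => if x - (j:ℝ) ≤ 0 then 0 else (x - (j:ℝ)) ^ c) := by
    intro c j
    apply Measurable.ite (measurableSet_le (measurable_id.sub_const _) measurable_const)
      measurable_const
    measurability
  have hmeasg : Measurable g := by
    apply Finset.measurable_sum
    intro j _
    exact (hmeasT α j).const_mul _
  have hmeasF : Measurable (fun x : ℝ => g x ^ 2) := hmeasg.pow_const 2
  set M : ℝ := (k:ℝ) + 1 with hM
  have hMpos : (0:ℝ) < M := by positivity
  -- nonnegativity of terms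
  have hTnn : ∀ (c : ℝ) (j : ℕ) (x : ℝ),
      0 ≤ (if x - (j:ℝ) ≤ 0 then 0 else (x - (j:ℝ)) ^ c) := by
    intro c j x
    split_ifs with h
    · exact le_refl 0
    · exact Real.rpow_nonneg (by linarith [not_le.mp h]) _
  -- global pointwise bound for the Iic part
  have hCle : ∀ j ∈ Finset.range (k+1), (Nat.choose k j : ℝ) ≤ 2^k := by
    intro j hj
    have h1 : Nat.choose k j ≤ 2^k := by
      calc Nat.choose k j ≤ ∑ m ∈ Finset.range (k+1), Nat.choose k m :=
            Finset.single_le_sum (fun i _ => Nat.zero_le _) hj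
        _ = 2^k := Nat.sum_range_choose k
    exact_mod_cast h1
  have hTsq : ∀ (j : ℕ) (x : ℝ),
      (if x - (j:ℝ) ≤ 0 then 0 else (x - (j:ℝ)) ^ α) ^ 2
        = (if x - (j:ℝ) ≤ 0 then 0 else (x - (j:ℝ)) ^ (2*α)) := by
    intro j x
    split_ifs with h
    · norm_num
    · have hpos : (0:ℝ) < x - j := by linarith [not_le.mp h]
      rw [show (2*α) = α * ((2:ℕ):ℝ) by push_cast; ring, Real.rpow_mul hpos.le,
        Real.rpow_natCast]
  have hgb : ∀ x : ℝ, g x ^ 2 ≤ (4:ℝ)^k * ((k:ℝ)+1) *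
      ∑ j ∈ Finset.range (k+1), (if x - (j:ℝ) ≤ 0 then 0 else (x - (j:ℝ)) ^ (2*α)) := by
    intro x
    have h1 : |g x| ≤ (2:ℝ)^k *
        ∑ j ∈ Finset.range (k+1), (if x - (j:ℝ) ≤ 0 then 0 else (x - (j:ℝ)) ^ α) := by
      rw [hg, Finset.mul_sum]
      refine le_trans (Finset.abs_sum_le_sum_abs _ _) (Finset.sum_le_sum fun j hj => ?_)
      rw [abs_mul, abs_mul, abs_pow, abs_neg, abs_one, one_pow, one_mul,
        abs_of_nonneg (by positivity : (0:ℝ) ≤ (Nat.choose k j : ℝ)),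
        abs_of_nonneg (hTnn α j x)]
      exact mul_le_mul_of_nonneg_right (hCle j hj) (hTnn α j x)
    have h2 : g x ^ 2 ≤ ((2:ℝ)^k *
        ∑ j ∈ Finset.range (k+1), (if x - (j:ℝ) ≤ 0 then 0 else (x - (j:ℝ)) ^ α)) ^ 2 := by
      rw [← sq_abs]
      exact pow_le_pow_left₀ (abs_nonneg _) h1 2
    refine le_trans h2 ?_
    rw [mul_pow, ← pow_mul]
    have h3 : (∑ j ∈ Finset.range (k+1),
        (if x - (j:ℝ) ≤ 0 then 0 else (x - (j:ℝ)) ^ α)) ^ 2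
        ≤ ((k:ℝ)+1) * ∑ j ∈ Finset.range (k+1),
            (if x - (j:ℝ) ≤ 0 then 0 else (x - (j:ℝ)) ^ α) ^ 2 := by
      have := sq_sum_le_card_mul_sum_sq
        (s := Finset.range (k+1))
        (f := fun j => (if x - (j:ℝ) ≤ 0 then 0 else (x - (j:ℝ)) ^ α))
      simpa using this
    have h4 : ((2:ℝ)^(k*2)) = (4:ℝ)^k := by
      rw [mul_comm, pow_mul]; norm_num
    rw [h4, mul_assoc]
    apply mul_le_mul_of_nonneg_left _ (by positivity : (0:ℝ) ≤ (4:ℝ)^k)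
    refine le_trans h3 ?_
    apply mul_le_mul_of_nonneg_left _ (by positivity : (0:ℝ) ≤ (k:ℝ)+1)
    apply Finset.sum_le_sum
    intro j _
    rw [hTsq j x]
  -- integrability on Iic M
  have hUj : ∀ j ∈ Finset.range (k+1),
      IntegrableOn (fun x : ℝ => if x - (j:ℝ) ≤ 0 then 0 else (x - (j:ℝ)) ^ (2*α))
        (Set.Iic M) volume := by
    intro j hj
    have hjk : (j:ℝ) ≤ (k:ℝ) := by
      exact_mod_cast Nat.le_of_lt_succ (Finset.mem_range.mp hj)
    have hjM : (j:ℝ) ≤ M := by rw [hM]; linarith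
    have h0 : IntervalIntegrable (fun x : ℝ => x ^ (2*α)) volume 0 (M - j) :=
      intervalIntegral.intervalIntegrable_rpow' (by linarith)
    have h1 : IntervalIntegrable (fun x : ℝ => (x - (j:ℝ)) ^ (2*α)) volume (j:ℝ) M := by
      have := h0.comp_sub_right (j:ℝ)
      simpa using this
    have hI : IntegrableOn (fun x : ℝ => (x - (j:ℝ)) ^ (2*α)) (Set.Ioc (j:ℝ) M) volume :=
      (intervalIntegrable_iff_integrableOn_Ioc_of_le hjM).mp h1
    have heq : (fun x : ℝ => if x - (j:ℝ) ≤ 0 then 0 else (x - (j:ℝ)) ^ (2*α))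
        = Set.indicator (Set.Ioi (j:ℝ)) (fun x => (x - (j:ℝ)) ^ (2*α)) := by
      ext x
      rw [Set.indicator_apply]
      by_cases h : x - (j:ℝ) ≤ 0
      · rw [if_pos h, if_neg (by simp only [Set.mem_Ioi]; intro hc; linarith)]
      · rw [if_neg h, if_pos (by simp only [Set.mem_Ioi]; linarith [not_le.mp h])]
    rw [heq, IntegrableOn, integrable_indicator_iff measurableSet_Ioi, IntegrableOn,
      Measure.restrict_restrict measurableSet_Ioi, Set.Ioi_inter_Iic]
    exact hI
  have hBint : IntegrableOn (fun x : ℝ => (4:ℝ)^k * ((k:ℝ)+1) *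
      ∑ j ∈ Finset.range (k+1), (if x - (j:ℝ) ≤ 0 then 0 else (x - (j:ℝ)) ^ (2*α)))
      (Set.Iic M) volume := by
    exact (integrable_finset_sum _ hUj).const_mul _
  have hIic : IntegrableOn (fun x : ℝ => g x ^ 2) (Set.Iic M) volume := by
    apply Integrable.mono' hBint (hmeasF.aestronglyMeasurable.restrict)
    apply ae_of_all
    intro x
    rw [Real.norm_eq_abs, abs_of_nonneg (sq_nonneg _)]
    exact hgb x
  -- integrability on Ioi M
  have hαk : α < (k:ℝ) := by linarith
  obtain ⟨C, hC0, hC⟩ := Sfd_decay k α hαk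
  set a : ℝ := 2*(α - (k:ℝ)) with ha_def
  have ha : a < -1 := by rw [ha_def]; linarith
  have hgS : ∀ x : ℝ, M < x → g x = Sfd k α x := by
    intro x hx
    rw [hg, Sfd]
    apply Finset.sum_congr rfl
    intro j hj
    have hjk : (j:ℝ) ≤ (k:ℝ) := by
      exact_mod_cast Nat.le_of_lt_succ (Finset.mem_range.mp hj)
    rw [if_neg (by rw [hM] at hx; push_cast at hx ⊢; intro hc; linarith)]
  have hIoi : IntegrableOn (fun x : ℝ => g x ^ 2) (Set.Ioi M) volume := by
    have hbint : IntegrableOn (fun x : ℝ => (C^2 * ((k:ℝ)+1)^(-a)) * x ^ a)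
        (Set.Ioi M) volume :=
      (integrableOn_Ioi_rpow_of_lt ha hMpos).const_mul _
    apply Integrable.mono' hbint (hmeasF.aestronglyMeasurable.restrict)
    rw [ae_restrict_iff' measurableSet_Ioi]
    apply ae_of_all
    intro x hx
    rw [Set.mem_Ioi] at hx
    have hxM : M < x := hx
    have hxk : (k:ℝ) < x := by rw [hM] at hxM; linarith
    have hxk0 : (0:ℝ) < x - k := by linarith
    rw [Real.norm_eq_abs, abs_of_nonneg (sq_nonneg _), hgS x hxM]
    have h1 : Sfd k α x ^ 2 ≤ (C * (x - (k:ℝ)) ^ (α - (k:ℝ))) ^ 2 := by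
      rw [← sq_abs]
      exact pow_le_pow_left₀ (abs_nonneg _) (hC x hxk) 2
    have h2 : (C * (x - (k:ℝ)) ^ (α - (k:ℝ))) ^ 2 = C^2 * (x - (k:ℝ)) ^ a := by
      rw [mul_pow, ha_def, show 2*(α - (k:ℝ)) = (α - (k:ℝ)) * ((2:ℕ):ℝ) by push_cast; ring,
        Real.rpow_mul hxk0.le, Real.rpow_natCast]
    have h3 : (x - (k:ℝ)) ^ a ≤ ((k:ℝ)+1)^(-a) * x ^ a := by
      have hdiv : x / ((k:ℝ)+1) ≤ x - (k:ℝ) := by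
        rw [div_le_iff₀ (by positivity : (0:ℝ) < (k:ℝ)+1)]
        have : M ≤ x := hxM.le
        rw [hM] at this
        nlinarith [Nat.cast_nonneg (α := ℝ) k]
      have hdivpos : (0:ℝ) < x / ((k:ℝ)+1) := by
        have : (0:ℝ) < x := by linarith
        positivity
      have h4 : (x - (k:ℝ)) ^ a ≤ (x / ((k:ℝ)+1)) ^ a :=
        Real.rpow_le_rpow_of_nonpos hdivpos hdiv (by linarith)
      refine le_trans h4 ?_
      rw [Real.div_rpow (by linarith : (0:ℝ) ≤ x) (by positivity : (0:ℝ) ≤ (k:ℝ)+1),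
        Real.rpow_neg (by positivity : (0:ℝ) ≤ (k:ℝ)+1), div_eq_mul_inv, mul_comm]
    calc Sfd k α x ^ 2 ≤ C^2 * (x - (k:ℝ)) ^ a := by rw [← h2]; exact h1
      _ ≤ C^2 * (((k:ℝ)+1)^(-a) * x ^ a) := by
          apply mul_le_mul_of_nonneg_left h3 (sq_nonneg C)
      _ = C^2 * ((k:ℝ)+1)^(-a) * x ^ a := by ring
  have hall : IntegrableOn (fun x : ℝ => g x ^ 2) (Set.Iic M ∪ Set.Ioi M) volume :=
    hIic.union hIoi
  rw [Set.Iic_union_Ioi] at hall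
  exact integrableOn_univ.mp hall
end

section
/- Let α ∈ (-1/2,0) ∪ (0,1/2), δ > 0, and let f̃ ∈ C²(ℝ) with support in (-δ, δ) and f̃(0) ≠ 0, and define g̃(x) = f̃(x)|x|^α (with g̃(0)=0). Define R̃(u) = ∫_{-δ}^{δ} (g̃(-s) - g̃(-u-s))² ds for u > 0. Then R̃(u) = u^{2α+1} Z(u) where Z(u) = ∫_0^1 x^{2α} f̃(ux)² dx + ∫_1^{δ/u} (x^α f̃(ux) - (x-1)^α f̃(ux-u))² dx, and lim_{u→0⁺} Z(u) = f̃(0)² ( ∫_0^1 x^{2α} dx + ∫_1^∞ (x^α - (x-1)^α)² dx ), which is finite and strictly positive. -/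
open MeasureTheory Filter intervalIntegral Set

lemma aux_shift_bound (β : ℝ) : ∃ C : ℝ, 0 < C ∧ ∀ x : ℝ, 2 ≤ x → (x - 1) ^ β ≤ C * x ^ β := by
  rcases le_or_gt 0 β with hβ | hβ
  · exact ⟨1, one_pos, fun x hx => by
      rw [one_mul]; exact Real.rpow_le_rpow (by linarith) (by linarith) hβ⟩
  · refine ⟨2 ^ (-β), Real.rpow_pos_of_pos two_pos _, fun x hx => ?_⟩
    have h2 : (0:ℝ) < x / 2 := by linarith
    calc (x-1:ℝ)^β ≤ (x/2)^β := Real.rpow_le_rpow_of_nonpos h2 (by linarith) hβ.le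
    _ = x ^ β / 2 ^ β := Real.div_rpow (by linarith) (by norm_num) β
    _ = 2^(-β) * x^β := by rw [Real.rpow_neg (by norm_num)]; field_simp

lemma aux_mvt {α : ℝ} (hα1 : α < 1) {x : ℝ} (hx : 2 ≤ x) :
    |x ^ α - (x-1) ^ α| ≤ |α| * (x-1) ^ (α-1) := by
  have h0 : (0:ℝ) < x - 1 := by linarith
  obtain ⟨c, hc, hceq⟩ := exists_hasDerivAt_eq_slope (fun t => t ^ α)
    (fun t => α * t ^ (α-1)) (by linarith : x - 1 < x)
    (fun t ht => (Real.continuousAt_rpow_const t α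
      (Or.inl (by simp only [mem_Icc] at ht; linarith : t ≠ 0))).continuousWithinAt)
    (fun t ht => Real.hasDerivAt_rpow_const
      (Or.inl (by simp only [mem_Ioo] at ht; linarith : t ≠ 0)))
  have hc0 : (0:ℝ) < c := by linarith [hc.1]
  have : x ^ α - (x-1) ^ α = α * c ^ (α - 1) := by
    rw [hceq]; field_simp; ring
  rw [this, abs_mul, abs_of_pos (Real.rpow_pos_of_pos hc0 _)]
  exact mul_le_mul_of_nonneg_left
    (Real.rpow_le_rpow_of_nonpos h0 hc.1.le (by linarith)) (abs_nonneg α)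

lemma aux_contOn {α : ℝ} : ContinuousOn (fun x : ℝ => (x-1) ^ α) (Ioi 1) := fun x hx =>
  ((continuousAt_id.sub continuousAt_const).rpow_const
    (Or.inl (by simp only [mem_Ioi, id] at hx ⊢; intro h; simp only [Pi.sub_apply, id_eq] at h; linarith [h]))).continuousWithinAt

lemma aux_contOn' {α : ℝ} : ContinuousOn (fun x : ℝ => x ^ α) (Ioi 1) := fun x hx =>
  (Real.continuousAt_rpow_const x α (Or.inl (by simp only [mem_Ioi] at hx; linarith))).continuousWithinAt

lemma aux_int_Ioc {β : ℝ} (hβ : -1 < β) : IntegrableOn (fun x : ℝ => (x-1) ^ β) (Ioc 1 2) := by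
  have := ((intervalIntegrable_rpow' (a := 0) (b := 1) hβ).comp_sub_right 1).1
  norm_num at this
  exact this

lemma aux_int_Ioi2 {β : ℝ} (hβ : β < -1) : IntegrableOn (fun x : ℝ => (x-1) ^ β) (Ioi 2) := by
  have hb : IntegrableOn (fun x : ℝ => x ^ β) (Ioi 2) := integrableOn_Ioi_rpow_of_lt hβ two_pos
  obtain ⟨C, hC0, hC⟩ := aux_shift_bound β
  refine Integrable.mono' (hb.const_mul C)
    ((aux_contOn.mono (Ioi_subset_Ioi (by norm_num))).aestronglyMeasurable measurableSet_Ioi)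
    (ae_restrict_of_forall_mem measurableSet_Ioi fun x hx => ?_)
  have hx2 : (2:ℝ) ≤ x := le_of_lt hx
  rw [Real.norm_eq_abs, abs_of_nonneg (Real.rpow_nonneg (by linarith) _)]
  exact hC x hx2

lemma aux_part3 {α : ℝ} (h1 : -(1/2:ℝ) < α) (h2 : α < 1/2) :
    IntegrableOn (fun x : ℝ => (x ^ α - (x-1) ^ α) ^ 2) (Ioi 1) := by
  have hcont : ContinuousOn (fun x : ℝ => (x ^ α - (x-1) ^ α) ^ 2) (Ioi 1) :=
    ((aux_contOn'.sub aux_contOn).pow 2)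
  rw [← Ioc_union_Ioi_eq_Ioi (by norm_num : (1:ℝ) ≤ 2)]
  refine IntegrableOn.union ?_ ?_
  · have h2a : (-1:ℝ) < 2*α := by linarith
    have hb : IntegrableOn (fun x : ℝ => 2 * x ^ (2*α) + 2 * (x-1) ^ (2*α)) (Ioc 1 2) :=
      (((intervalIntegrable_rpow' h2a (a:=1) (b:=2)).1).const_mul 2).add
        ((aux_int_Ioc h2a).const_mul 2)
    refine Integrable.mono' hb
      ((hcont.mono Ioc_subset_Ioi_self).aestronglyMeasurable measurableSet_Ioc)
      (ae_restrict_of_forall_mem measurableSet_Ioc fun x hx => ?_)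
    obtain ⟨hx1, hx2⟩ := hx
    have hx0 : (0:ℝ) < x := by linarith
    have hy0 : (0:ℝ) < x - 1 := by linarith
    have e1 : x ^ (2*α) = (x ^ α)^2 := by
      rw [mul_comm, Real.rpow_mul hx0.le, Real.rpow_two]
    have e2 : (x-1) ^ (2*α) = ((x-1) ^ α)^2 := by
      rw [mul_comm, Real.rpow_mul hy0.le, Real.rpow_two]
    rw [Real.norm_eq_abs, abs_of_nonneg (sq_nonneg _), e1, e2]
    nlinarith [sq_nonneg (x ^ α + (x-1)^α)]
  · have hlt : 2*α - 2 < -1 := by linarith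
    refine Integrable.mono' ((aux_int_Ioi2 hlt).const_mul (α^2))
      ((hcont.mono (Ioi_subset_Ioi (by norm_num))).aestronglyMeasurable measurableSet_Ioi)
      (ae_restrict_of_forall_mem measurableSet_Ioi fun x hx => ?_)
    have hx2 : (2:ℝ) ≤ x := le_of_lt hx
    have hmvt := aux_mvt (by linarith : α < 1) hx2
    have hy0 : (0:ℝ) ≤ x - 1 := by linarith
    rw [Real.norm_eq_abs, abs_of_nonneg (sq_nonneg _)]
    calc (x ^ α - (x-1)^α)^2 = |x ^ α - (x-1)^α|^2 := (sq_abs _).symm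
    _ ≤ (|α| * (x-1)^(α-1))^2 := by
        nlinarith [abs_nonneg (x^α - (x-1)^α),
          mul_nonneg (abs_nonneg α) (Real.rpow_nonneg hy0 (α-1))]
    _ = α^2 * (x-1)^(2*α-2) := by
        have he : (α-1) * ((2:ℕ):ℝ) = 2*α-2 := by push_cast; ring
        rw [mul_pow, sq_abs, ← Real.rpow_natCast ((x-1)^(α-1)) 2, ← Real.rpow_mul hy0, he]

lemma aux_intH {β : ℝ} (h1 : -1 < β) (h2 : β < 1) :
    IntegrableOn (fun x : ℝ => (x-1) ^ β / x^2) (Ioi 1) := by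
  have hcont : ContinuousOn (fun x : ℝ => (x-1) ^ β / x^2) (Ioi 1) := by
    refine aux_contOn.div (Continuous.continuousOn (by fun_prop)) fun x hx => ?_
    have : (1:ℝ) < x := hx
    positivity
  rw [← Ioc_union_Ioi_eq_Ioi (by norm_num : (1:ℝ) ≤ 2)]
  refine IntegrableOn.union ?_ ?_
  · refine Integrable.mono' (aux_int_Ioc h1)
      ((hcont.mono Ioc_subset_Ioi_self).aestronglyMeasurable measurableSet_Ioc)
      (ae_restrict_of_forall_mem measurableSet_Ioc fun x hx => ?_)
    obtain ⟨hx1, hx2⟩ := hx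
    have hy : (0:ℝ) ≤ x - 1 := by linarith
    have hxsq : (1:ℝ) ≤ x^2 := by nlinarith
    rw [Real.norm_eq_abs, abs_of_nonneg (div_nonneg (Real.rpow_nonneg hy _) (by positivity))]
    calc (x-1)^β / x^2 ≤ (x-1)^β / 1 :=
          div_le_div_of_nonneg_left (Real.rpow_nonneg hy _) (by norm_num) hxsq
    _ = (x-1)^β := div_one _
  · obtain ⟨C, hC0, hC⟩ := aux_shift_bound β
    have hint : IntegrableOn (fun x : ℝ => C * x ^ (β - 2)) (Ioi 2) :=
      (integrableOn_Ioi_rpow_of_lt (by linarith) two_pos).const_mul C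
    refine Integrable.mono' hint
      ((hcont.mono (Ioi_subset_Ioi (by norm_num))).aestronglyMeasurable measurableSet_Ioi)
      (ae_restrict_of_forall_mem measurableSet_Ioi fun x hx => ?_)
    have hx2 : (2:ℝ) ≤ x := le_of_lt hx
    have hx0 : (0:ℝ) < x := by linarith
    have hy : (0:ℝ) ≤ x - 1 := by linarith
    rw [Real.norm_eq_abs, abs_of_nonneg (div_nonneg (Real.rpow_nonneg hy _) (by positivity))]
    have he : x ^ (β - 2) = x ^ β / x ^ 2 := by
      rw [Real.rpow_sub hx0, Real.rpow_two]
    rw [he, ← mul_div_assoc]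
    gcongr
    exact hC x hx2
lemma aux_T1 {α : ℝ} {f : ℝ → ℝ} (h1 : -(1/2:ℝ) < α) (hf : Continuous f)
    (M : ℝ) (hM : ∀ x, |f x| ≤ M) :
    Tendsto (fun u => ∫ x in (0:ℝ)..1, x ^ (2*α) * f (u*x)^2) (nhdsWithin (0:ℝ) (Ioi 0))
      (nhds (∫ x in Ioc (0:ℝ) 1, x ^ (2*α) * f 0 ^2)) := by
  have h2a : (-1:ℝ) < 2*α := by linarith
  have hrw : ∀ u : ℝ, (∫ x in (0:ℝ)..1, x ^ (2*α) * f (u*x)^2)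
      = ∫ x in Ioc (0:ℝ) 1, x ^ (2*α) * f (u*x)^2 := fun u =>
    integral_of_le zero_le_one
  simp only [hrw]
  have hcont : ∀ u : ℝ, ContinuousOn (fun x : ℝ => x ^ (2*α) * f (u*x)^2) (Ioc 0 1) := by
    intro u
    refine ContinuousOn.mul (fun x hx => ?_) (Continuous.continuousOn (by fun_prop))
    exact (Real.continuousAt_rpow_const x (2*α) (Or.inl (ne_of_gt hx.1))).continuousWithinAt
  refine tendsto_integral_filter_of_dominated_convergence
    (F := fun (u : ℝ) (x : ℝ) => x ^ (2*α) * f (u*x)^2)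
    (f := fun x : ℝ => x ^ (2*α) * f 0 ^2)
    (fun x => x ^ (2*α) * M^2) ?_ ?_ ?_ ?_
  · exact Eventually.of_forall fun u => ((hcont u).aestronglyMeasurable measurableSet_Ioc)
  · refine Eventually.of_forall fun u => ae_restrict_of_forall_mem measurableSet_Ioc fun x hx => ?_
    have hx0 : (0:ℝ) < x := hx.1
    have hb : f (u*x)^2 ≤ M^2 := by
      rw [← sq_abs]
      exact pow_le_pow_left₀ (abs_nonneg _) (hM _) 2
    rw [Real.norm_eq_abs, abs_of_nonneg (mul_nonneg (Real.rpow_nonneg hx0.le _) (sq_nonneg _))]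
    exact mul_le_mul_of_nonneg_left hb (Real.rpow_nonneg hx0.le _)
  · exact ((intervalIntegrable_rpow' h2a (a := 0) (b := 1)).1).mul_const _
  · refine ae_restrict_of_forall_mem measurableSet_Ioc fun x hx => ?_
    refine Tendsto.mul tendsto_const_nhds (Tendsto.pow ?_ 2)
    have h : Tendsto (fun u : ℝ => u * x) (nhdsWithin (0:ℝ) (Ioi 0)) (nhds 0) := by
      simpa using ((continuous_mul_right x).tendsto 0).mono_left
        (nhdsWithin_le_nhds (s := Ioi (0:ℝ)))
    exact (hf.tendsto 0).comp h

lemma aux_T2 {α δ : ℝ} {f : ℝ → ℝ} (h1 : -(1/2:ℝ) < α) (h2 : α < 1/2) (hδ : 0 < δ)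
    (hf : Continuous f) (M K : ℝ) (hM : ∀ x, |f x| ≤ M)
    (hlip : ∀ a b : ℝ, |f a - f b| ≤ K * |a - b|) :
    Tendsto (fun u => ∫ x in (1:ℝ)..(δ/u), (x^α * f (u*x) - (x-1)^α * f (u*x-u))^2)
      (nhdsWithin (0:ℝ) (Ioi 0))
      (nhds (∫ x in Ioi (1:ℝ), f 0^2 * (x^α - (x-1)^α)^2)) := by
  have hK0 : 0 ≤ K := by
    have h := hlip 1 0
    have h2 := abs_nonneg (f 1 - f 0)
    simp at h
    linarith
  set ψ : ℝ → ℝ → ℝ := fun u x => (x^α * f (u*x) - (x-1)^α * f (u*x-u))^2 with hψ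
  set F : ℝ → ℝ → ℝ := fun u => indicator (Ioc 1 (δ/u)) (ψ u) with hF
  set G : ℝ → ℝ := fun x => 2*M^2 * ((x^α - (x-1)^α)^2) + 2*K^2*δ^2 * ((x-1)^(2*α)/x^2)
    with hG
  have hmem : Ioo (0:ℝ) δ ∈ nhdsWithin (0:ℝ) (Ioi 0) :=
    Ioo_mem_nhdsGT_of_mem (by simp [hδ, le_refl])
  have hψc : ∀ u, ContinuousOn (ψ u) (Ioi 1) := fun u =>
    ((aux_contOn'.mul (Continuous.continuousOn (by fun_prop))).sub
      (aux_contOn.mul (Continuous.continuousOn (by fun_prop)))).pow 2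
  have heq : (fun u => ∫ x in (1:ℝ)..(δ/u), ψ u x)
      =ᶠ[nhdsWithin (0:ℝ) (Ioi 0)] fun u => ∫ x in Ioi (1:ℝ), F u x := by
    filter_upwards [hmem] with u hu
    have hu0 : (0:ℝ) < u := hu.1
    have h1c : (1:ℝ) ≤ δ/u := (one_le_div hu0).2 hu.2.le
    rw [integral_of_le h1c, hF, setIntegral_indicator measurableSet_Ioc,
      inter_eq_self_of_subset_right Ioc_subset_Ioi_self]
  rw [tendsto_congr' heq]
  refine tendsto_integral_filter_of_dominated_convergence
    (F := F) (f := fun x : ℝ => f 0^2 * (x^α - (x-1)^α)^2) G ?_ ?_ ?_ ?_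
  · exact Eventually.of_forall fun u =>
      (((hψc u).aestronglyMeasurable measurableSet_Ioi).indicator measurableSet_Ioc)
  · filter_upwards [hmem] with u hu
    have hu0 : (0:ℝ) < u := hu.1
    refine ae_restrict_of_forall_mem measurableSet_Ioi fun x hx => ?_
    have hx1 : (1:ℝ) < x := hx
    have hx0 : (0:ℝ) < x := by linarith
    have hy0 : (0:ℝ) ≤ x - 1 := by linarith
    have hGpos : 0 ≤ G x := by
      have := Real.rpow_nonneg hy0 (2*α)
      have hsq := sq_nonneg (x^α - (x-1)^α)
      have : (0:ℝ) ≤ (x-1)^(2*α)/x^2 := by positivity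
      positivity
    by_cases hxm : x ∈ Ioc 1 (δ/u)
    · have hux : u ≤ δ / x := by
        rw [le_div_iff₀ hx0]
        have := (le_div_iff₀ hu0).1 hxm.2
        linarith [this]
      set A : ℝ := (x^α - (x-1)^α) * f (u*x) with hA
      set B : ℝ := (x-1)^α * (f (u*x) - f (u*x-u)) with hB
      have halg : ψ u x = (A + B)^2 := by rw [hψ, hA, hB]; ring
      have hsum : (A+B)^2 ≤ 2*A^2 + 2*B^2 := by nlinarith [sq_nonneg (A - B)]
      have hA2 : A^2 ≤ M^2 * (x^α - (x-1)^α)^2 := by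
        have hfb : f (u*x)^2 ≤ M^2 := by
          rw [← sq_abs]; exact pow_le_pow_left₀ (abs_nonneg _) (hM _) 2
        have : A^2 = (x^α - (x-1)^α)^2 * f (u*x)^2 := by rw [hA]; ring
        rw [this]
        calc (x^α - (x-1)^α)^2 * f (u*x)^2 ≤ (x^α - (x-1)^α)^2 * M^2 :=
              mul_le_mul_of_nonneg_left hfb (sq_nonneg _)
        _ = M^2 * (x^α - (x-1)^α)^2 := by ring
      have hB2 : B^2 ≤ K^2*δ^2 * ((x-1)^(2*α)/x^2) := by
        have hd : (f (u*x) - f (u*x-u))^2 ≤ K^2 * u^2 := by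
          have hl := hlip (u*x) (u*x-u)
          have habs : |u*x - (u*x-u)| = u := by
            rw [abs_of_nonneg (by linarith : (0:ℝ) ≤ u*x - (u*x-u))]; ring
          rw [habs] at hl
          calc (f (u*x) - f (u*x-u))^2 = |f (u*x) - f (u*x-u)|^2 := (sq_abs _).symm
          _ ≤ (K*u)^2 := pow_le_pow_left₀ (abs_nonneg _) hl 2
          _ = K^2*u^2 := by ring
        have hu2 : u^2 ≤ δ^2/x^2 := by
          have := pow_le_pow_left₀ hu0.le hux 2
          rwa [div_pow] at this
        have he2 : ((x-1):ℝ)^α * (x-1)^α = (x-1)^(2*α) := by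
          rw [two_mul, Real.rpow_add (by linarith : (0:ℝ) < x-1)]
        have hB2' : B^2 = (x-1)^(2*α) * (f (u*x) - f (u*x-u))^2 := by
          rw [hB, ← he2]; ring
        rw [hB2']
        have hrn : (0:ℝ) ≤ (x-1)^(2*α) := Real.rpow_nonneg hy0 _
        calc (x-1)^(2*α) * (f (u*x) - f (u*x-u))^2 ≤ (x-1)^(2*α) * (K^2 * u^2) :=
              mul_le_mul_of_nonneg_left hd hrn
        _ ≤ (x-1)^(2*α) * (K^2 * (δ^2/x^2)) := by
              have : K^2 * u^2 ≤ K^2 * (δ^2/x^2) :=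
                mul_le_mul_of_nonneg_left hu2 (sq_nonneg K)
              exact mul_le_mul_of_nonneg_left this hrn
        _ = K^2*δ^2 * ((x-1)^(2*α)/x^2) := by ring
      rw [show F u x = ψ u x from indicator_of_mem hxm _, Real.norm_eq_abs,
        abs_of_nonneg (sq_nonneg _), halg]
      calc (A+B)^2 ≤ 2*A^2+2*B^2 := hsum
      _ ≤ 2*(M^2*(x^α-(x-1)^α)^2) + 2*(K^2*δ^2*((x-1)^(2*α)/x^2)) := by linarith
      _ = G x := by simp only [hG]; ring
    · rw [show F u x = 0 from indicator_of_notMem hxm _]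
      simpa using hGpos
  · exact ((aux_part3 h1 h2).const_mul (2*M^2)).add
      ((aux_intH (by linarith) (by linarith)).const_mul (2*K^2*δ^2))
  · refine ae_restrict_of_forall_mem measurableSet_Ioi fun x hx => ?_
    have hx1 : (1:ℝ) < x := hx
    have hx0 : (0:ℝ) < x := by linarith
    have hmem2 : Ioo (0:ℝ) (δ/x) ∈ nhdsWithin (0:ℝ) (Ioi 0) :=
      Ioo_mem_nhdsGT_of_mem (by constructor <;> [exact le_refl 0; positivity])
    have heq2 : (fun u => ψ u x) =ᶠ[nhdsWithin (0:ℝ) (Ioi 0)] fun u => F u x := by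
      filter_upwards [hmem2] with u hu
      have hu0 : (0:ℝ) < u := hu.1
      have : x ≤ δ/u := by
        rw [le_div_iff₀ hu0]
        have := (lt_div_iff₀ hx0).1 hu.2
        linarith
      exact (indicator_of_mem (mem_Ioc.2 ⟨hx1, this⟩) _).symm
    refine Tendsto.congr' heq2 ?_
    have hc : Continuous fun u : ℝ => ψ u x := by
      rw [hψ]; fun_prop
    have := (hc.tendsto 0).mono_left (nhdsWithin_le_nhds (s := Ioi (0:ℝ)))
    have hval : ψ 0 x = f 0^2 * (x^α - (x-1)^α)^2 := by
      rw [hψ]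
      norm_num
      ring
    rwa [hval] at this
lemma aux_scale {α δ : ℝ} {f g : ℝ → ℝ} (hα0 : α ≠ 0) (h2a : -1 < 2*α)
    (hg : ∀ x, g x = if x ≤ 0 then 0 else f x * |x| ^ α)
    (hf : Continuous f) {u : ℝ} (hu : 0 < u) (huδ : u < δ) :
    (∫ s in (-δ)..δ, (g (-s) - g (-u - s)) ^ 2)
      = u ^ (2*α + 1) * ((∫ x in (0:ℝ)..1, x ^ (2*α) * f (u * x) ^ 2) +
        ∫ x in (1:ℝ)..(δ/u), (x ^ α * f (u * x) - (x - 1) ^ α * f (u * x - u)) ^ 2) := by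
  have hδ0 : 0 < δ := lt_trans hu huδ
  set c : ℝ := δ / u with hc
  have hc1 : 1 < c := (one_lt_div hu).2 huδ
  have hg0 : ∀ x : ℝ, x ≤ 0 → g x = 0 := fun x hx => by rw [hg x, if_pos hx]
  have hgp : ∀ x : ℝ, 0 < x → g x = f x * x ^ α := fun x hx => by
    rw [hg x, if_neg (not_le.2 hx), abs_of_pos hx]
  set h : ℝ → ℝ := fun t => (g t - g (t - u)) ^ 2 with hh
  set φ : ℝ → ℝ := fun x => h (u * x) with hφ
  -- Step A+B : R = ∫ t in -δ..δ, h t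
  have stepA : (∫ s in (-δ)..δ, (g (-s) - g (-u - s)) ^ 2) = ∫ t in (-δ)..δ, h t := by
    have : ∀ s : ℝ, (g (-s) - g (-u - s)) ^ 2 = h (-s) := by
      intro s
      have : -u - s = -s - u := by ring
      rw [hh]
      simp only [this]
    simp only [this]
    rw [integral_comp_neg h, neg_neg]
  -- Step C : substitution t = u x
  have stepC : (∫ t in (-δ)..δ, h t) = u * ∫ x in (-c)..c, φ x := by
    have hcomp := integral_comp_mul_left (a := -c) (b := c) (c := u) h hu.ne'
    have e1 : u * (-c) = -δ := by rw [hc]; field_simp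
    have e2 : u * c = δ := by rw [hc]; field_simp
    rw [e1, e2] at hcomp
    rw [hφ]
    rw [hcomp, smul_eq_mul, ← mul_assoc, mul_inv_cancel₀ hu.ne', one_mul]
  -- pointwise identities
  have e1 : EqOn φ (fun _ => (0:ℝ)) (uIcc (-c) 0) := by
    intro x hx
    rw [uIcc_of_le (by linarith : -c ≤ 0)] at hx
    have hx0 : x ≤ 0 := hx.2
    have h1 : u * x ≤ 0 := mul_nonpos_iff.2 (Or.inl ⟨hu.le, hx0⟩)
    simp only [hφ, hh]
    rw [hg0 _ h1, hg0 _ (by linarith : u * x - u ≤ 0)]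
    simp
  have e2 : EqOn φ (fun x => u ^ (2*α) * (x ^ (2*α) * f (u * x) ^ 2)) (uIcc 0 1) := by
    intro x hx
    rw [uIcc_of_le zero_le_one] at hx
    simp only [hφ, hh]
    rcases eq_or_lt_of_le hx.1 with hx0 | hx0
    · rw [← hx0]
      rw [hg0 _ (by norm_num), hg0 _ (by linarith), Real.zero_rpow (by
        intro hcon; exact hα0 (by linarith))]
      simp
    · have hux : 0 < u * x := mul_pos hu hx0
      rw [hgp _ hux, hg0 _ (by nlinarith [hx.2] : u * x - u ≤ 0)]
      have hm : (u * x) ^ α = u ^ α * x ^ α := Real.mul_rpow hu.le hx0.le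
      have hsq : ∀ y : ℝ, 0 ≤ y → (y ^ α) ^ 2 = y ^ (2*α) := fun y hy => by
        rw [← Real.rpow_natCast (y ^ α) 2, ← Real.rpow_mul hy]
        norm_num
        rw [mul_comm]
      rw [hm]
      linear_combination f (u*x)^2 * (x ^ α)^2 * (hsq u hu.le)
        + f (u*x)^2 * u^(2*α) * (hsq x hx0.le)
  have e3 : EqOn φ (fun x => u ^ (2*α) *
      ((x ^ α * f (u * x) - (x - 1) ^ α * f (u * x - u)) ^ 2)) (uIcc 1 c) := by
    intro x hx
    rw [uIcc_of_le hc1.le] at hx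
    have hx1 : 1 ≤ x := hx.1
    have hx0 : 0 < x := by linarith
    simp only [hφ, hh]
    have hsq : ∀ y : ℝ, 0 ≤ y → (y ^ α) ^ 2 = y ^ (2*α) := fun y hy => by
      rw [← Real.rpow_natCast (y ^ α) 2, ← Real.rpow_mul hy]
      norm_num
      rw [mul_comm]
    have hgux : g (u * x) = f (u * x) * (u ^ α * x ^ α) := by
      rw [hgp _ (mul_pos hu hx0), Real.mul_rpow hu.le hx0.le]
    have hgux2 : g (u * x - u) = f (u * x - u) * (u ^ α * (x - 1) ^ α) := by
      rcases eq_or_lt_of_le hx1 with hx1' | hx1'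
      · rw [← hx1']
        rw [hg0 _ (by norm_num), show (1:ℝ)-1 = 0 from by norm_num, Real.zero_rpow hα0]
        ring
      · have hpos : 0 < u * x - u := by nlinarith
        have : u * x - u = u * (x - 1) := by ring
        rw [hgp _ hpos, this, Real.mul_rpow hu.le (by linarith : (0:ℝ) ≤ x - 1)]
    rw [hgux, hgux2]
    linear_combination (x ^ α * f (u*x) - (x-1) ^ α * f (u*x-u))^2 * hsq u hu.le
  -- integrabilities
  have hcu : Continuous fun x : ℝ => f (u * x) ^ 2 := by fun_prop
  have hI2' : IntervalIntegrable (fun x : ℝ => u ^ (2*α) * (x ^ (2*α) * f (u * x) ^ 2))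
      volume 0 1 :=
    (((intervalIntegrable_rpow' h2a (a := 0) (b := 1)).mul_continuousOn
       hcu.continuousOn)).const_mul _
  have hI2 : IntervalIntegrable φ volume 0 1 :=
    hI2'.congr_ae (ae_restrict_of_forall_mem measurableSet_uIoc fun x hx =>
      (e2 (uIoc_subset_uIcc hx)).symm)
  have hI1 : IntervalIntegrable φ volume (-c) 0 :=
    (intervalIntegrable_const (c := (0:ℝ))).congr_ae
      (ae_restrict_of_forall_mem measurableSet_uIoc fun x hx =>
        (e1 (uIoc_subset_uIcc hx)).symm)
  -- integrability on 1..c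
  have hshift : ∀ β : ℝ, -1 < β → IntervalIntegrable (fun x : ℝ => (x - 1) ^ β) volume 1 c := by
    intro β hβ
    have := (intervalIntegrable_rpow' hβ (a := 0) (b := c - 1)).comp_sub_right 1
    rwa [zero_add, sub_add_cancel] at this
  have hA : ContinuousOn (fun x : ℝ => x ^ α * f (u * x)) (uIcc 1 c) := by
    rw [uIcc_of_le hc1.le]
    refine ContinuousOn.mul (fun x hx => ?_) (Continuous.continuousOn (by fun_prop))
    exact (Real.continuousAt_rpow_const x α (Or.inl (by
      have : (1:ℝ) ≤ x := hx.1; intro hc'; rw [hc'] at this; norm_num at this))).continuousWithinAt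
  have hA2 : IntervalIntegrable (fun x : ℝ => (x ^ α * f (u * x)) ^ 2) volume 1 c :=
    (hA.pow 2).intervalIntegrable
  have hB2 : IntervalIntegrable (fun x : ℝ => (x - 1) ^ (2*α) * f (u * x - u) ^ 2)
      volume 1 c :=
    (hshift _ h2a).mul_continuousOn (Continuous.continuousOn (by fun_prop))
  have hAB : IntervalIntegrable (fun x : ℝ => (x - 1) ^ α * (x ^ α * f (u * x) * f (u * x - u)))
      volume 1 c := by
    refine (hshift _ (by linarith)).mul_continuousOn ?_
    exact (hA.mul (Continuous.continuousOn (by fun_prop)))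
  have hψint : IntervalIntegrable
      (fun x : ℝ => (x ^ α * f (u * x) - (x - 1) ^ α * f (u * x - u)) ^ 2) volume 1 c := by
    refine ((hA2.sub (hAB.const_mul 2)).add hB2).congr_ae
      (ae_restrict_of_forall_mem measurableSet_uIoc fun x hx => ?_)
    have hx1 : 1 < x := by
      have := uIoc_subset_uIcc hx
      rw [uIcc_of_le hc1.le] at this
      rcases (uIoc_of_le hc1.le ▸ hx : x ∈ Ioc 1 c) with ⟨h1', _⟩
      exact h1'
    have hy0 : (0:ℝ) ≤ x - 1 := by linarith
    have hsq : ((x - 1) ^ α) ^ 2 = (x - 1) ^ (2*α) := by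
      rw [← Real.rpow_natCast ((x - 1) ^ α) 2, ← Real.rpow_mul hy0]
      norm_num
      rw [mul_comm]
    have : ((x:ℝ) ^ α * f (u * x) - (x - 1) ^ α * f (u * x - u)) ^ 2
        = (x ^ α * f (u * x)) ^ 2 - 2 * ((x - 1) ^ α * (x ^ α * f (u * x) * f (u * x - u)))
          + ((x - 1) ^ α) ^ 2 * f (u * x - u) ^ 2 := by ring
    rw [hsq] at this
    exact this.symm
  have hI3 : IntervalIntegrable φ volume 1 c :=
    (hψint.const_mul (u ^ (2*α))).congr_ae
      (ae_restrict_of_forall_mem measurableSet_uIoc fun x hx =>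
        (e3 (uIoc_subset_uIcc hx)).symm)
  -- assemble
  have hsplit : (∫ x in (-c)..c, φ x)
      = (∫ x in (-c)..(0:ℝ), φ x) + (∫ x in (0:ℝ)..1, φ x) + ∫ x in (1:ℝ)..c, φ x := by
    rw [← integral_add_adjacent_intervals (hI1.trans hI2) hI3,
      ← integral_add_adjacent_intervals hI1 hI2]
  have v1 : (∫ x in (-c)..(0:ℝ), φ x) = 0 := by
    rw [integral_congr e1]; simp
  have v2 : (∫ x in (0:ℝ)..1, φ x) = u ^ (2*α) * ∫ x in (0:ℝ)..1, x ^ (2*α) * f (u * x) ^ 2 := by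
    rw [integral_congr e2, intervalIntegral.integral_const_mul]
  have v3 : (∫ x in (1:ℝ)..c, φ x) = u ^ (2*α) *
      ∫ x in (1:ℝ)..c, (x ^ α * f (u * x) - (x - 1) ^ α * f (u * x - u)) ^ 2 := by
    rw [integral_congr e3, intervalIntegral.integral_const_mul]
  rw [stepA, stepC, hsplit, v1, v2, v3]
  have hpow : u ^ (2*α + 1) = u ^ (2*α) * u := by
    rw [Real.rpow_add hu, Real.rpow_one]
  rw [hpow]
  ring


theorem stmt_11 (α : ℝ) (hα : α ∈ Set.Ioo (-(1/2) : ℝ) 0 ∪ Set.Ioo (0:ℝ) (1/2))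
    (δ : ℝ) (hδ : 0 < δ) (f : ℝ → ℝ) (hf : ContDiff ℝ 2 f)
    (hsupp : ∀ x, x ∉ Set.Ioo (-δ) δ → f x = 0) (hf0 : f 0 ≠ 0) :
    let g : ℝ → ℝ := fun x => if x ≤ 0 then 0 else f x * |x| ^ α
    let R : ℝ → ℝ := fun u => ∫ s in (-δ)..δ, (g (-s) - g (-u - s)) ^ 2
    let Z : ℝ → ℝ := fun u =>
      (∫ x in (0:ℝ)..1, x ^ (2*α) * f (u * x) ^ 2) +
        ∫ x in (1:ℝ)..(δ/u), (x ^ α * f (u * x) - (x - 1) ^ α * f (u * x - u)) ^ 2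
    let L : ℝ := f 0 ^ 2 * ((∫ x in (0:ℝ)..1, x ^ (2*α)) +
        ∫ x in Set.Ioi (1:ℝ), (x ^ α - (x - 1) ^ α) ^ 2)
    (∀ u : ℝ, 0 < u → u < δ → R u = u ^ (2*α + 1) * Z u) ∧
    Tendsto Z (nhdsWithin 0 (Set.Ioi 0)) (nhds L) ∧
    IntegrableOn (fun x : ℝ => (x ^ α - (x - 1) ^ α) ^ 2) (Set.Ioi 1) ∧
    0 < L := by
  intro g R Z L
  have h1 : -(1/2:ℝ) < α := by
    rcases hα with h | h
    · exact h.1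
    · linarith [h.1]
  have h2 : α < 1/2 := by
    rcases hα with h | h
    · linarith [h.2]
    · exact h.2
  have hα0 : α ≠ 0 := by
    rcases hα with h | h
    · exact ne_of_lt h.2
    · exact ne_of_gt h.1
  have h2a : (-1:ℝ) < 2*α := by linarith
  have hfc : Continuous f := hf.continuous
  -- compact support and bounds
  have hcs : HasCompactSupport f :=
    HasCompactSupport.intro isCompact_Icc fun x hx =>
      hsupp x fun hmem => hx (Ioo_subset_Icc_self hmem)
  obtain ⟨M, hM⟩ := hcs.exists_bound_of_continuous hfc
  have hM' : ∀ x, |f x| ≤ M := fun x => by simpa [Real.norm_eq_abs] using hM x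
  have hdiff : Differentiable ℝ f := hf.differentiable (by norm_num)
  have hdc : Continuous (deriv f) := hf.continuous_deriv (by norm_num)
  obtain ⟨K0, hK0⟩ := hcs.deriv.exists_bound_of_continuous hdc
  set K : NNReal := ⟨max K0 0, le_max_right _ _⟩ with hKdef
  have hlipW : LipschitzWith K f := by
    refine lipschitzWith_of_nnnorm_deriv_le hdiff fun x => ?_
    rw [← NNReal.coe_le_coe, coe_nnnorm]
    exact le_trans (hK0 x) (le_max_left _ _)
  have hlip : ∀ a b : ℝ, |f a - f b| ≤ (max K0 0) * |a - b| := fun a b => by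
    have := hlipW.dist_le_mul a b
    rw [Real.dist_eq, Real.dist_eq] at this; exact this
  refine ⟨?_, ?_, aux_part3 h1 h2, ?_⟩
  · intro u hu huδ
    exact aux_scale hα0 h2a (fun x => rfl) hfc hu huδ
  · have hT1 := aux_T1 h1 hfc M hM'
    have hT2 := aux_T2 h1 h2 hδ hfc M (max K0 0) hM' hlip
    have := hT1.add hT2
    have hL : (∫ x in Ioc (0:ℝ) 1, x ^ (2*α) * f 0 ^2)
        + (∫ x in Ioi (1:ℝ), f 0^2 * (x^α - (x-1)^α)^2) = L := by
      show _ = f 0 ^ 2 * _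
      rw [← integral_of_le zero_le_one, intervalIntegral.integral_mul_const, MeasureTheory.integral_const_mul]
      ring
    rw [← hL]
    exact this
  · have hI1 : (∫ x in (0:ℝ)..1, x ^ (2*α)) = 1/(2*α+1) := by
      rw [integral_rpow (Or.inl h2a), Real.one_rpow,
        Real.zero_rpow (by linarith : 2*α+1 ≠ 0)]
      norm_num
    have hI2 : 0 ≤ ∫ x in Ioi (1:ℝ), (x ^ α - (x - 1) ^ α) ^ 2 :=
      setIntegral_nonneg measurableSet_Ioi fun x _ => sq_nonneg _
    have hf02 : 0 < f 0 ^ 2 := by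
      rw [← sq_abs]
      exact pow_pos (abs_pos.2 hf0) 2
    have hI1pos : 0 < (∫ x in (0:ℝ)..1, x ^ (2*α)) := by
      rw [hI1]
      have hp : 0 < 2*α+1 := by linarith
      positivity
    exact mul_pos hf02 (by linarith)
end
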